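/- arXiv:2401.13271 — 3 statements merged into one kernel-verified Lean document; each statement's English description precedes it below -/
import Mathlib

section
/- For all real a, b > 0, ∫₀^1 t^(a−1)(1+t)^(−a−b) dt + ∫₀^1 t^(b−1)(1+t)^(−a−b) dt = Γ(a)·Γ(b)/Γ(a+b). -/
open Real MeasureTheory Set

/-- The real Beta integrand equals the real part of the complex one on `[0,1]`. -/
lemma beta_ofReal (a b : ℝ) {x : ℝ} (hx : x ∈ Icc (0:ℝ) 1) :
    ((x : ℂ) ^ ((a:ℂ) - 1) * ((1:ℂ) - x) ^ ((b:ℂ) - 1)) =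
      ((x ^ (a - 1) * (1 - x) ^ (b - 1) : ℝ) : ℂ) := by
  have h1 : ((x ^ (a-1) : ℝ) : ℂ) = (x : ℂ) ^ ((a:ℂ) - 1) := by
    rw [Complex.ofReal_cpow hx.1]; push_cast; ring_nf
  have h2 : (((1 - x) ^ (b-1) : ℝ) : ℂ) = ((1:ℂ) - x) ^ ((b:ℂ) - 1) := by
    rw [Complex.ofReal_cpow (by linarith [hx.2])]; push_cast; ring_nf
  rw [Complex.ofReal_mul, h1, h2]

lemma beta_integrable {a b : ℝ} (ha : 0 < a) (hb : 0 < b) :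
    IntegrableOn (fun x : ℝ => x ^ (a - 1) * (1 - x) ^ (b - 1)) (Ioc (0:ℝ) 1) := by
  have h := (Complex.betaIntegral_convergent (u := (a:ℂ)) (v := (b:ℂ))
    (by simpa using ha) (by simpa using hb)).1
  have h' : IntegrableOn (fun x : ℝ =>
      ((x : ℂ) ^ ((a:ℂ) - 1) * ((1:ℂ) - x) ^ ((b:ℂ) - 1)).re) (Ioc (0:ℝ) 1) := h.re
  refine h'.congr_fun (fun x hx => ?_) measurableSet_Ioc
  beta_reduce
  rw [beta_ofReal a b ⟨hx.1.le, hx.2⟩, Complex.ofReal_re]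

lemma beta_value {a b : ℝ} (ha : 0 < a) (hb : 0 < b) :
    ∫ x in Ioc (0:ℝ) 1, x ^ (a - 1) * (1 - x) ^ (b - 1)
      = Gamma a * Gamma b / Gamma (a + b) := by
  have h := Complex.Gamma_mul_Gamma_eq_betaIntegral (s := (a:ℂ)) (t := (b:ℂ))
    (by simpa using ha) (by simpa using hb)
  rw [Complex.betaIntegral] at h
  have hbi : (∫ x in (0:ℝ)..1, (x:ℂ) ^ ((a:ℂ)-1) * ((1:ℂ)-x) ^ ((b:ℂ)-1))
      = ((∫ x in (0:ℝ)..1, x ^ (a-1) * (1-x) ^ (b-1) : ℝ) : ℂ) := by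
    rw [← intervalIntegral.integral_ofReal]
    refine intervalIntegral.integral_congr fun x hx => ?_
    rw [uIcc_of_le (by norm_num)] at hx
    exact beta_ofReal a b hx
  rw [hbi, ← Complex.ofReal_add a b, Complex.Gamma_ofReal, Complex.Gamma_ofReal,
    Complex.Gamma_ofReal, ← Complex.ofReal_mul, ← Complex.ofReal_mul] at h
  have h2 : Gamma a * Gamma b
      = Gamma (a + b) * ∫ x in (0:ℝ)..1, x ^ (a-1) * (1-x) ^ (b-1) :=
    Complex.ofReal_injective h
  have hG : Gamma (a + b) ≠ 0 := (Real.Gamma_pos_of_pos (by linarith)).ne'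
  rw [intervalIntegral.integral_of_le (by norm_num)] at h2
  field_simp [h2]
  rw [h2]; ring

theorem stmt4 (a b : ℝ) (ha : 0 < a) (hb : 0 < b) :
    (∫ t in Ioo (0 : ℝ) 1, t ^ (a - 1) * (1 + t) ^ (-a - b)) +
      (∫ t in Ioo (0 : ℝ) 1, t ^ (b - 1) * (1 + t) ^ (-a - b)) =
      Gamma a * Gamma b / Gamma (a + b) := by
  set g : ℝ → ℝ := fun x => x ^ (a - 1) * (1 - x) ^ (b - 1) with hg
  -- change of variables x = t/(1+t) for the first integral
  have himg1 : (fun t : ℝ => t / (1 + t)) '' Ioo 0 1 = Ioo (0:ℝ) (1/2) := by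
    ext y
    constructor
    · rintro ⟨t, ⟨ht0, ht1⟩, rfl⟩
      refine ⟨div_pos ht0 (by linarith), ?_⟩
      rw [div_lt_iff₀ (by linarith)]; linarith
    · rintro ⟨hy0, hy12⟩
      refine ⟨y / (1 - y), ⟨div_pos hy0 (by linarith), ?_⟩, ?_⟩
      · rw [div_lt_one (by linarith)]; linarith
      · have hne : (1:ℝ) - y ≠ 0 := by linarith
        have hden : (1 - y) * (1 + y / (1 - y)) = 1 := by field_simp; ring
        show (y / (1 - y)) / (1 + y / (1 - y)) = y
        rw [div_div, hden, div_one]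
  have himg2 : (fun t : ℝ => 1 / (1 + t)) '' Ioo 0 1 = Ioo (1/2 : ℝ) 1 := by
    ext y
    constructor
    · rintro ⟨t, ⟨ht0, ht1⟩, rfl⟩
      constructor
      · rw [lt_div_iff₀ (by linarith)]; linarith
      · rw [div_lt_one (by linarith)]; linarith
    · rintro ⟨hy12, hy1⟩
      refine ⟨(1 - y) / y, ⟨div_pos (by linarith) (by linarith), ?_⟩, ?_⟩
      · rw [div_lt_one (by linarith)]; linarith
      · field_simp; ring
  have hd1 : ∀ t ∈ Ioo (0:ℝ) 1, HasDerivWithinAt (fun t : ℝ => t / (1 + t))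
      (((1 + t)^2)⁻¹) (Ioo 0 1) t := by
    intro t ht
    have hne : (1 : ℝ) + t ≠ 0 := by nlinarith [ht.1]
    have h := (hasDerivAt_id t).div ((hasDerivAt_const t (1:ℝ)).add (hasDerivAt_id t)) hne
    have : HasDerivAt (fun t : ℝ => t / (1 + t)) (((1 + t)^2)⁻¹) t := by
      refine h.congr_deriv ?_
      simp only [Pi.add_apply, id]
      field_simp
      ring
    exact this.hasDerivWithinAt
  have hd2 : ∀ t ∈ Ioo (0:ℝ) 1, HasDerivWithinAt (fun t : ℝ => 1 / (1 + t))
      (-(((1 + t)^2)⁻¹)) (Ioo 0 1) t := by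
    intro t ht
    have hne : (1 : ℝ) + t ≠ 0 := by nlinarith [ht.1]
    have h := (hasDerivAt_const t (1:ℝ)).div ((hasDerivAt_const t (1:ℝ)).add (hasDerivAt_id t)) hne
    have : HasDerivAt (fun t : ℝ => 1 / (1 + t)) (-(((1 + t)^2)⁻¹)) t := by
      refine h.congr_deriv ?_
      simp only [Pi.add_apply, id]
      field_simp
      ring
    exact this.hasDerivWithinAt
  have hinj1 : InjOn (fun t : ℝ => t / (1 + t)) (Ioo 0 1) := by
    intro x hx y hy h
    have hxne : (1:ℝ) + x ≠ 0 := by nlinarith [hx.1]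
    have hyne : (1:ℝ) + y ≠ 0 := by nlinarith [hy.1]
    field_simp at h
    linarith
  have hinj2 : InjOn (fun t : ℝ => 1 / (1 + t)) (Ioo 0 1) := by
    intro x hx y hy h
    have hxne : (1:ℝ) + x ≠ 0 := by nlinarith [hx.1]
    have hyne : (1:ℝ) + y ≠ 0 := by nlinarith [hy.1]
    field_simp at h
    linarith
  have hcv1 : ∫ x in Ioo (0:ℝ) (1/2), g x
      = ∫ t in Ioo (0:ℝ) 1, t ^ (a - 1) * (1 + t) ^ (-a - b) := by
    rw [← himg1, integral_image_eq_integral_abs_deriv_smul measurableSet_Ioo hd1 hinj1 g]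
    refine setIntegral_congr_fun measurableSet_Ioo fun t ht => ?_
    have ht0 : 0 < t := ht.1
    have hu : (0:ℝ) < 1 + t := by linarith
    have h2 : 1 - t / (1 + t) = 1 / (1 + t) := by field_simp; ring
    rw [smul_eq_mul, hg]
    simp only [h2]
    rw [abs_of_pos (by positivity), Real.div_rpow ht0.le hu.le,
      Real.div_rpow zero_le_one hu.le, Real.one_rpow]
    have key : (1 + t) ^ (-a - b)
        = ((1 + t)^2)⁻¹ * (t ^ (a-1) / (1+t) ^ (a-1) * (1 / (1+t) ^ (b-1))) / t ^ (a-1) := by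
      have ht' : t ^ (a-1) ≠ 0 := by positivity
      have h1' : (1+t) ^ (a-1) ≠ 0 := by positivity
      have h2' : (1+t) ^ (b-1) ≠ 0 := by positivity
      have hsq : ((1+t):ℝ)^2 = (1+t) ^ (2:ℝ) := by
        rw [← Real.rpow_natCast (1+t) 2]; norm_num
      field_simp
      rw [hsq, ← Real.rpow_add hu, ← Real.rpow_add hu, ← Real.rpow_add hu,
        show 2 + (-a - b) + (a - 1) + (b - 1) = 0 by ring, Real.rpow_zero]
    rw [key]
    have ht' : t ^ (a-1) ≠ 0 := by positivity
    field_simp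
  have hcv2 : ∫ x in Ioo (1/2:ℝ) 1, g x
      = ∫ t in Ioo (0:ℝ) 1, t ^ (b - 1) * (1 + t) ^ (-a - b) := by
    rw [← himg2, integral_image_eq_integral_abs_deriv_smul measurableSet_Ioo hd2 hinj2 g]
    refine setIntegral_congr_fun measurableSet_Ioo fun t ht => ?_
    have ht0 : 0 < t := ht.1
    have hu : (0:ℝ) < 1 + t := by linarith
    have h2 : 1 - 1 / (1 + t) = t / (1 + t) := by field_simp; ring
    rw [smul_eq_mul, hg]
    simp only [h2]
    rw [abs_neg, abs_of_pos (by positivity), Real.div_rpow ht0.le hu.le,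
      Real.div_rpow zero_le_one hu.le, Real.one_rpow]
    have key : (1 + t) ^ (-a - b)
        = ((1 + t)^2)⁻¹ * (1 / (1+t) ^ (a-1) * (t ^ (b-1) / (1+t) ^ (b-1))) / t ^ (b-1) := by
      have ht' : t ^ (b-1) ≠ 0 := by positivity
      have h1' : (1+t) ^ (a-1) ≠ 0 := by positivity
      have h2' : (1+t) ^ (b-1) ≠ 0 := by positivity
      have hsq : ((1+t):ℝ)^2 = (1+t) ^ (2:ℝ) := by
        rw [← Real.rpow_natCast (1+t) 2]; norm_num
      field_simp
      rw [hsq, ← Real.rpow_add hu, ← Real.rpow_add hu, ← Real.rpow_add hu,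
        show 2 + (-a - b) + (a - 1) + (b - 1) = 0 by ring, Real.rpow_zero]
    rw [key]
    have ht' : t ^ (b-1) ≠ 0 := by positivity
    field_simp
  -- split the beta integral at 1/2
  have hint := beta_integrable ha hb
  have hint1 : IntegrableOn g (Ioc (0:ℝ) (1/2)) :=
    hint.mono_set (Ioc_subset_Ioc le_rfl (by norm_num))
  have hint2 : IntegrableOn g (Ioc (1/2:ℝ) 1) :=
    hint.mono_set (Ioc_subset_Ioc (by norm_num) le_rfl)
  have hsplit : ∫ x in Ioc (0:ℝ) 1, g x
      = (∫ x in Ioc (0:ℝ) (1/2), g x) + ∫ x in Ioc (1/2:ℝ) 1, g x := by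
    rw [← setIntegral_union (Ioc_disjoint_Ioc_of_le le_rfl) measurableSet_Ioc hint1 hint2,
      Set.Ioc_union_Ioc_eq_Ioc (by norm_num) (by norm_num)]
  rw [← hcv1, ← hcv2,
    setIntegral_congr_set Ioo_ae_eq_Ioc, setIntegral_congr_set Ioo_ae_eq_Ioc,
    ← hsplit, beta_value ha hb]
end

section
/- For every real γ with 0 < γ < √2, the integral ∫₁^∞ x^(γ²/4 − 1) (x+1)^(−γ²/2) dx converges and equals cos(πγ²/4) · Γ(γ²/4) · Γ(1−γ²/2) / Γ(1−γ²/4). -/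
open Real MeasureTheory Set

lemma gamma_id {a : ℝ} (h0 : 0 < a) (h1 : a < 1/2) :
    Real.Gamma a * Real.Gamma a / (2 * Real.Gamma (2*a)) =
    Real.cos (π*a) * Real.Gamma a * Real.Gamma (1-2*a) / Real.Gamma (1-a) := by
  have hpi := Real.pi_pos
  have hsin : 0 < Real.sin (π*a) :=
    Real.sin_pos_of_pos_of_lt_pi (by positivity) (by nlinarith)
  have hcos : 0 < Real.cos (π*a) :=
    Real.cos_pos_of_mem_Ioo ⟨by nlinarith, by nlinarith⟩
  have hΓa : 0 < Real.Gamma a := Real.Gamma_pos_of_pos h0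
  have hΓ2a : 0 < Real.Gamma (2*a) := Real.Gamma_pos_of_pos (by linarith)
  have hΓ1a : 0 < Real.Gamma (1-a) := Real.Gamma_pos_of_pos (by linarith)
  have e1 : Real.Gamma a * Real.Gamma (1-a) * Real.sin (π*a) = π := by
    rw [Real.Gamma_mul_Gamma_one_sub]; field_simp
  have e2 : Real.Gamma (2*a) * Real.Gamma (1-2*a) * (2 * Real.sin (π*a) * Real.cos (π*a)) = π := by
    have h2 := Real.Gamma_mul_Gamma_one_sub (2*a)
    have hs2 : Real.sin (π*(2*a)) = 2 * Real.sin (π*a) * Real.cos (π*a) := by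
      rw [show π*(2*a) = 2*(π*a) by ring, Real.sin_two_mul]
    have hs2pos : 0 < Real.sin (π*(2*a)) := by rw [hs2]; positivity
    rw [← hs2, h2, div_mul_cancel₀ _ hs2pos.ne']
  rw [div_eq_div_iff (by positivity) (by positivity)]
  have G' : (Real.Gamma a * Real.Gamma a * Real.Gamma (1-a)) * Real.sin (π*a)
      = (Real.cos (π*a) * Real.Gamma a * Real.Gamma (1-2*a) * (2*Real.Gamma (2*a))) * Real.sin (π*a) := by
    linear_combination Real.Gamma a * e1 - Real.Gamma a * e2
  exact mul_right_cancel₀ hsin.ne' G'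

lemma beta_intable {a : ℝ} (ha : 0 < a) {c d : ℝ} (hc : 0 ≤ c) (hc1 : c ≤ 1)
    (hd0 : 0 ≤ d) (hd : d ≤ 1) :
    IntervalIntegrable (fun x : ℝ => x^(a-1)*(1-x)^(a-1)) volume c d := by
  have h1 : IntervalIntegrable (fun x : ℝ => x^(a-1)*(1-x)^(a-1)) volume 0 (1/2) := by
    apply IntervalIntegrable.mul_continuousOn
    · exact intervalIntegral.intervalIntegrable_rpow' (by linarith)
    · apply ContinuousOn.rpow_const (by fun_prop)
      intro x hx
      rw [Set.uIcc_of_le (by norm_num)] at hx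
      left
      intro h
      have h1 : (1:ℝ) = x := sub_eq_zero.mp h
      linarith [hx.2]
  have h2 : IntervalIntegrable (fun x : ℝ => x^(a-1)*(1-x)^(a-1)) volume (1/2) 1 := by
    have key : IntervalIntegrable (fun x : ℝ => (1-x)^(a-1)*(x)^(a-1)) volume (1/2) 1 := by
      apply IntervalIntegrable.mul_continuousOn
      · have h := (intervalIntegral.intervalIntegrable_rpow' (r := a-1) (by linarith)
          (a := 0) (b := 1/2)).comp_sub_left 1
        rw [show (1:ℝ)-1/2 = 1/2 by norm_num, show (1:ℝ)-0 = 1 by norm_num] at h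
        exact h.symm
      · apply ContinuousOn.rpow_const (by fun_prop)
        intro x hx
        rw [Set.uIcc_of_le (by norm_num)] at hx
        left; intro h; rw [h] at hx; linarith [hx.1]
    simpa [mul_comm] using key
  refine (h1.trans h2).mono_set (Set.uIcc_subset_uIcc ?_ ?_) <;>
    rw [Set.uIcc_of_le zero_le_one] <;> constructor <;> assumption

lemma beta_val {a : ℝ} (ha : 0 < a) :
    Real.Gamma a * Real.Gamma a =
      Real.Gamma (2*a) * ∫ x in (0:ℝ)..1, x^(a-1) * (1-x)^(a-1) := by
  have h := Complex.Gamma_mul_Gamma_eq_betaIntegral (s := (a:ℂ)) (t := (a:ℂ))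
    (by simpa using ha) (by simpa using ha)
  rw [Complex.betaIntegral] at h
  have key : (∫ x in (0:ℝ)..1, (x:ℂ)^((a:ℂ)-1) * ((1:ℂ)-(x:ℂ))^((a:ℂ)-1))
      = ((∫ x in (0:ℝ)..1, x^(a-1)*(1-x)^(a-1) : ℝ) : ℂ) := by
    rw [← intervalIntegral.integral_ofReal]
    apply intervalIntegral.integral_congr
    intro x hx
    rw [Set.uIcc_of_le (by norm_num)] at hx
    have e : ((a:ℂ)-1) = ((a-1:ℝ):ℂ) := by push_cast; ring
    have e' : (1:ℂ) - (x:ℂ) = ((1-x:ℝ):ℂ) := by push_cast; ring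
    simp only [e, e']
    rw [← Complex.ofReal_cpow hx.1,
      ← Complex.ofReal_cpow (by linarith [hx.2] : (0:ℝ) ≤ 1-x)]
    norm_cast
  rw [key] at h
  have h2 : (a:ℂ) + (a:ℂ) = ((2*a : ℝ) : ℂ) := by push_cast; ring
  rw [h2, Complex.Gamma_ofReal, Complex.Gamma_ofReal] at h
  exact_mod_cast h

lemma beta_half {a : ℝ} (ha : 0 < a) :
    (∫ x in (0:ℝ)..1, x^(a-1) * (1-x)^(a-1))
      = 2 * ∫ x in ((1:ℝ)/2)..1, x^(a-1) * (1-x)^(a-1) := by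
  have hsplit := intervalIntegral.integral_add_adjacent_intervals
    (beta_intable (c := 0) (d := 1/2) ha le_rfl zero_le_one (by norm_num) (by norm_num))
    (beta_intable (c := 1/2) (d := 1) ha (by norm_num) (by norm_num) zero_le_one le_rfl)
  have hsym : (∫ x in (0:ℝ)..(1/2), x^(a-1) * (1-x)^(a-1))
      = ∫ x in ((1:ℝ)/2)..1, x^(a-1) * (1-x)^(a-1) := by
    have := intervalIntegral.integral_comp_sub_left
      (a := (0:ℝ)) (b := 1/2) (fun x => x^(a-1)*(1-x)^(a-1)) 1
    norm_num at this
    rw [← this]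
    apply intervalIntegral.integral_congr
    intro x _
    dsimp only
    ring
  linarith [hsplit, hsym]

theorem stmt5 (γ : ℝ) (h0 : 0 < γ) (h2 : γ < Real.sqrt 2) :
    IntegrableOn (fun x : ℝ => x ^ (γ ^ 2 / 4 - 1) * (x + 1) ^ (-(γ ^ 2 / 2))) (Ioi 1) volume ∧
    ∫ x in Ioi (1 : ℝ), x ^ (γ ^ 2 / 4 - 1) * (x + 1) ^ (-(γ ^ 2 / 2)) =
      Real.cos (π * γ ^ 2 / 4) * Gamma (γ ^ 2 / 4) * Gamma (1 - γ ^ 2 / 2) /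
        Gamma (1 - γ ^ 2 / 4) := by
  have hγ2 : γ^2 < 2 := by
    nlinarith [Real.sq_sqrt (by norm_num : (0:ℝ) ≤ 2), Real.sqrt_nonneg 2]
  set a := γ^2/4 with ha
  have ha0 : 0 < a := by positivity
  have ha2 : a < 1/2 := by rw [ha]; linarith
  have hgoal1 : γ^2/2 = 2*a := by rw [ha]; ring
  have hgoal2 : π * γ^2 / 4 = π * a := by rw [ha]; ring
  -- change of variables g(x) = x/(x+1)
  have hs : MeasurableSet (Ioi (1:ℝ)) := measurableSet_Ioi
  have hderiv : ∀ x ∈ Ioi (1:ℝ),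
      HasDerivWithinAt (fun x : ℝ => x/(x+1)) (((x+1)^2)⁻¹) (Ioi 1) x := by
    intro x hx
    have hx1 : (1:ℝ) < x := hx
    have hd : HasDerivAt (fun x : ℝ => x/(x+1))
        ((1*(x+1) - x*1)/(x+1)^2) x :=
      (hasDerivAt_id x).div ((hasDerivAt_id x).add_const 1) (by positivity)
    have : (1*(x+1) - x*1)/(x+1)^2 = ((x+1)^2)⁻¹ := by field_simp; ring
    rw [this] at hd
    exact hd.hasDerivWithinAt
  have hinj : InjOn (fun x : ℝ => x/(x+1)) (Ioi 1) := by
    intro x hx y hy h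
    simp only at h
    have hx1 : (1:ℝ) < x := hx
    have hy1 : (1:ℝ) < y := hy
    rw [div_eq_div_iff (by linarith) (by linarith)] at h
    nlinarith
  have himg : (fun x : ℝ => x/(x+1)) '' Ioi 1 = Ioo (1/2) 1 := by
    ext t
    constructor
    · rintro ⟨x, hx, rfl⟩
      have hx1 : (1:ℝ) < x := hx
      constructor
      · rw [div_lt_div_iff₀ (by norm_num) (by linarith)]; linarith
      · rw [div_lt_one (by linarith)]; linarith
    · rintro ⟨h1, h2⟩
      refine ⟨t/(1-t), ?_, ?_⟩
      · rw [Set.mem_Ioi, lt_div_iff₀ (by linarith)]; linarith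
      · have h1t : (1:ℝ) - t ≠ 0 := by intro h; linarith [sub_eq_zero.mp h]
        field_simp; ring
  have hpt : ∀ x ∈ Ioi (1:ℝ),
      |((x+1)^2)⁻¹| • ((x/(x+1))^(a-1) * (1-(x/(x+1)))^(a-1)) = x^(a-1) * (x+1)^(-(2*a)) := by
    intro x hx
    have hx1 : (1:ℝ) < x := hx
    have hx0 : (0:ℝ) < x := by linarith
    have hxp : (0:ℝ) < x + 1 := by linarith
    have h1 : 1 - x/(x+1) = (x+1)⁻¹ := by field_simp; ring
    rw [smul_eq_mul, h1, abs_of_pos (by positivity),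
      Real.div_rpow hx0.le hxp.le, Real.inv_rpow hxp.le]
    have e1 : ((x+1:ℝ)^2)⁻¹ = (x+1)^(-2 : ℝ) := by
      rw [Real.rpow_neg hxp.le, Real.rpow_two]
    have e2 : (x+1:ℝ)^(-(2*a)) = (x+1)^(-2 : ℝ) * ((x+1)^(a-1))⁻¹ * ((x+1)^(a-1))⁻¹ := by
      rw [← Real.rpow_neg hxp.le, ← Real.rpow_add hxp, ← Real.rpow_add hxp]
      congr 1
      ring
    rw [e1, e2]
    ring
  have hintIoo : IntegrableOn (fun t : ℝ => t^(a-1)*(1-t)^(a-1)) (Ioo (1/2) 1) volume := by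
    have := (beta_intable ha0 (c := 1/2) (d := 1) (by norm_num) (by norm_num) (by norm_num) le_rfl).1
    exact this.mono_set Set.Ioo_subset_Ioc_self
  have hint2 : IntegrableOn
      (fun x : ℝ => |((x+1)^2)⁻¹| • ((x/(x+1))^(a-1) * (1-(x/(x+1)))^(a-1))) (Ioi 1) volume := by
    have h := integrableOn_image_iff_integrableOn_abs_deriv_smul hs hderiv hinj
      (fun t : ℝ => t^(a-1)*(1-t)^(a-1))
    rw [himg] at h
    exact h.mp hintIoo
  have hint : IntegrableOn (fun x : ℝ => x^(a-1) * (x+1)^(-(2*a))) (Ioi 1) volume :=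
    hint2.congr_fun hpt hs
  have hval : (∫ x in Ioi (1:ℝ), x^(a-1) * (x+1)^(-(2*a)))
      = ∫ t in Ioo ((1:ℝ)/2) 1, t^(a-1)*(1-t)^(a-1) := by
    rw [← himg, integral_image_eq_integral_abs_deriv_smul hs hderiv hinj]
    exact setIntegral_congr_fun hs fun x hx => (hpt x hx).symm
  have hIoo_val : (∫ t in Ioo ((1:ℝ)/2) 1, t^(a-1)*(1-t)^(a-1))
      = ∫ x in ((1:ℝ)/2)..1, x^(a-1) * (1-x)^(a-1) := by
    rw [intervalIntegral.integral_of_le (by norm_num), integral_Ioc_eq_integral_Ioo]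
  have hΓ2a : 0 < Real.Gamma (2*a) := Real.Gamma_pos_of_pos (by linarith)
  have hB := beta_val ha0
  have hH := beta_half ha0
  have hfinal : (∫ x in Ioi (1:ℝ), x^(a-1) * (x+1)^(-(2*a)))
      = Real.Gamma a * Real.Gamma a / (2 * Real.Gamma (2*a)) := by
    rw [hval, hIoo_val]
    have : (∫ x in ((1:ℝ)/2)..1, x^(a-1) * (1-x)^(a-1))
        = (∫ x in (0:ℝ)..1, x^(a-1) * (1-x)^(a-1)) / 2 := by linarith
    rw [this]
    rw [eq_div_iff (by positivity)]
    field_simp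
    rw [show a*2 = 2*a by ring]
    linarith [hB]
  constructor
  · rw [hgoal1]; exact hint
  · rw [hgoal1, hgoal2, hfinal, gamma_id ha0 ha2]
end

section
/- For real numbers p > −3, the integral ∫_{A×B} |x−y|^p dx dy is finite, where A = B(0,1/2) ⊂ ℝ² and B = B(0,1) \ B(0,1/2) ⊂ ℝ², each with two-dimensional Lebesgue measure. -/
open MeasureTheory Set
open scoped ENNReal

open Metric in
noncomputable abbrev E2aux : Type := EuclideanSpace ℝ (Fin 2)

lemma meas_rpow_aux {α} [MeasurableSpace α] {f : α → ℝ} (hf : Measurable f)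
    (hf0 : ∀ x, 0 ≤ f x) (p : ℝ) :
    Measurable fun x => f x ^ p := by
  have h : (fun x => f x ^ p)
      = fun x => if f x = 0 then (0:ℝ) ^ p else Real.exp (Real.log (f x) * p) := by
    funext x
    rcases eq_or_lt_of_le (hf0 x) with h0 | h0
    · simp [← h0]
    · rw [if_neg h0.ne', Real.rpow_def_of_pos h0]
  rw [h]
  exact Measurable.ite (hf (measurableSet_singleton 0)) measurable_const
    (Real.measurable_exp.comp ((Real.measurable_log.comp hf).mul_const p))

open Metric in
lemma vol_ball_aux (r : ℝ) (hr : 0 ≤ r) :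
    volume (ball (0:E2aux) r) = ENNReal.ofReal (Real.pi * r ^ 2) := by
  rw [EuclideanSpace.volume_ball]
  simp only [Fintype.card_fin]
  rw [Real.sq_sqrt Real.pi_pos.le]
  norm_num [Real.Gamma_two]
  rw [← ENNReal.ofReal_pow hr, ← ENNReal.ofReal_mul (by positivity)]
  ring_nf

open Metric in
lemma ball_lintegral_aux {q : ℝ} (hq : -2 < q) :
    (∫⁻ z in ball (0:E2aux) (3/2), ENNReal.ofReal (‖z‖ ^ q)) < ⊤ := by
  rcases le_or_gt 0 q with hq0 | hq0
  · calc (∫⁻ z in ball (0:E2aux) (3/2), ENNReal.ofReal (‖z‖ ^ q))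
        ≤ ∫⁻ _ in ball (0:E2aux) (3/2), ENNReal.ofReal ((3/2) ^ q) := by
          refine setLIntegral_mono' measurableSet_ball fun z hz => ?_
          exact ENNReal.ofReal_le_ofReal
            (Real.rpow_le_rpow (norm_nonneg z) (mem_ball_zero_iff.mp hz).le hq0)
      _ = ENNReal.ofReal ((3/2) ^ q) * volume (ball (0:E2aux) (3/2)) := setLIntegral_const _ _
      _ < ⊤ := ENNReal.mul_lt_top ENNReal.ofReal_lt_top measure_ball_lt_top
  · set r : ℕ → ℝ := fun n => (3/2) * (1/2) ^ n with hr
    have hrpos : ∀ n, 0 < r n := fun n => by positivity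
    set S : ℕ → Set E2aux := fun n => ball 0 (r n) \ ball 0 (r (n+1)) with hS
    have hcover : ball (0:E2aux) (3/2) ⊆ {0} ∪ ⋃ n, S n := by
      intro z hz
      rcases eq_or_ne z 0 with rfl | hz0
      · exact Or.inl rfl
      have hzpos : 0 < ‖z‖ := norm_pos_iff.mpr hz0
      have hex : ∃ n, r n ≤ ‖z‖ := by
        obtain ⟨n, hn⟩ := exists_pow_lt_of_lt_one (by positivity : (0:ℝ) < ‖z‖ * (2/3))
          (by norm_num : (1/2:ℝ) < 1)
        exact ⟨n, by simp only [hr]; nlinarith⟩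
      set N := Nat.find hex with hN
      have hNspec : r N ≤ ‖z‖ := Nat.find_spec hex
      have hN0 : N ≠ 0 := by
        intro h
        rw [h] at hNspec
        simp only [hr, pow_zero, mul_one] at hNspec
        exact absurd (mem_ball_zero_iff.mp hz) (not_lt.mpr hNspec)
      refine Or.inr (mem_iUnion.mpr ⟨N - 1, ?_⟩)
      have h1 : N - 1 + 1 = N := Nat.succ_pred_eq_of_pos (Nat.pos_of_ne_zero hN0)
      constructor
      · exact mem_ball_zero_iff.mpr (lt_of_not_ge fun h =>
          Nat.find_min hex (Nat.pred_lt hN0) h)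
      · rw [mem_ball_zero_iff, h1]
        exact not_lt.mpr hNspec
    have hbound : ∀ n, (∫⁻ z in S n, ENNReal.ofReal (‖z‖ ^ q))
        ≤ ENNReal.ofReal ((3/4:ℝ) ^ q * (Real.pi * (9/4)))
          * ENNReal.ofReal ((1/2:ℝ) ^ q * (1/4)) ^ n := by
      intro n
      have hmeas : MeasurableSet (S n) := measurableSet_ball.diff measurableSet_ball
      calc (∫⁻ z in S n, ENNReal.ofReal (‖z‖ ^ q))
          ≤ ∫⁻ _ in S n, ENNReal.ofReal ((r (n+1)) ^ q) := by
            refine setLIntegral_mono' hmeas fun z hz => ?_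
            refine ENNReal.ofReal_le_ofReal ?_
            exact Real.rpow_le_rpow_of_nonpos (hrpos (n+1))
              (not_lt.mp (fun h => hz.2 (mem_ball_zero_iff.mpr h))) hq0.le
        _ = ENNReal.ofReal ((r (n+1)) ^ q) * volume (S n) := setLIntegral_const _ _
        _ ≤ ENNReal.ofReal ((r (n+1)) ^ q) * volume (ball (0:E2aux) (r n)) :=
            mul_le_mul_right (measure_mono diff_subset) _
        _ = ENNReal.ofReal ((r (n+1)) ^ q * (Real.pi * (r n) ^ 2)) := by
            rw [vol_ball_aux _ (hrpos n).le,
              ← ENNReal.ofReal_mul (Real.rpow_nonneg (hrpos (n+1)).le _)]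
        _ = ENNReal.ofReal ((3/4:ℝ) ^ q * (Real.pi * (9/4)) * ((1/2:ℝ) ^ q * (1/4)) ^ n) := by
            congr 1
            have h1 : r (n+1) = (3/4) * (1/2) ^ n := by simp only [hr, pow_succ]; ring
            have h2 : r (n+1) ^ q = (3/4:ℝ) ^ q * ((1/2:ℝ) ^ q) ^ n := by
              rw [h1, Real.mul_rpow (by norm_num) (by positivity), ← Real.rpow_natCast ((1/2:ℝ)) n,
                ← Real.rpow_mul (by norm_num), mul_comm (n:ℝ) q, Real.rpow_mul (by norm_num),
                Real.rpow_natCast]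
            rw [h2]
            have h3 : (r n) ^ 2 = (9/4) * ((1/4:ℝ)) ^ n := by
              simp only [hr]; rw [mul_pow, ← pow_mul, mul_comm n 2, pow_mul]; norm_num
            rw [h3, mul_pow]
            ring
        _ = ENNReal.ofReal ((3/4:ℝ) ^ q * (Real.pi * (9/4)))
              * ENNReal.ofReal ((1/2:ℝ) ^ q * (1/4)) ^ n := by
            rw [← ENNReal.ofReal_pow (by positivity), ← ENNReal.ofReal_mul (by positivity)]
    have ht : ENNReal.ofReal ((1/2:ℝ) ^ q * (1/4)) < 1 := by
      rw [show (1:ℝ≥0∞) = ENNReal.ofReal 1 by simp]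
      refine ENNReal.ofReal_lt_ofReal_iff (by norm_num) |>.mpr ?_
      have h5 : (1/2:ℝ) ^ q < (1/2:ℝ) ^ (-2:ℝ) :=
        Real.rpow_lt_rpow_of_exponent_gt (by norm_num) (by norm_num) hq
      have h4 : (1/2:ℝ) ^ (-2:ℝ) = 4 := by
        rw [show (-2:ℝ) = -(2:ℕ) by norm_num, Real.rpow_neg (by norm_num), Real.rpow_natCast]
        norm_num
      nlinarith [Real.rpow_nonneg (by norm_num : (0:ℝ) ≤ 1/2) q]
    calc (∫⁻ z in ball (0:E2aux) (3/2), ENNReal.ofReal (‖z‖ ^ q))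
        ≤ ∫⁻ z in {0} ∪ ⋃ n, S n, ENNReal.ofReal (‖z‖ ^ q) :=
          lintegral_mono_set hcover
      _ ≤ (∫⁻ z in ({0}:Set E2aux), ENNReal.ofReal (‖z‖ ^ q))
          + ∫⁻ z in ⋃ n, S n, ENNReal.ofReal (‖z‖ ^ q) := lintegral_union_le _ _ _
      _ ≤ 0 + ∑' n, ∫⁻ z in S n, ENNReal.ofReal (‖z‖ ^ q) := by
          gcongr
          · rw [setLIntegral_measure_zero _ _ (measure_singleton 0)]
          · exact lintegral_iUnion_le _ _
      _ ≤ 0 + ∑' n, ENNReal.ofReal ((3/4:ℝ) ^ q * (Real.pi * (9/4)))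
            * ENNReal.ofReal ((1/2:ℝ) ^ q * (1/4)) ^ n := by
          gcongr with n
          exact hbound n
      _ = ENNReal.ofReal ((3/4:ℝ) ^ q * (Real.pi * (9/4)))
            * (1 - ENNReal.ofReal ((1/2:ℝ) ^ q * (1/4)))⁻¹ := by
          rw [zero_add, ENNReal.tsum_mul_left, ENNReal.tsum_geometric]
      _ < ⊤ := ENNReal.mul_lt_top ENNReal.ofReal_lt_top
          (ENNReal.inv_lt_top.mpr (tsub_pos_of_lt ht))

open Metric in
lemma shell_bound_aux (z : E2aux) :
    volume ((fun x : E2aux => x - z) ⁻¹' (ball (0:E2aux) 1 \ ball 0 (1/2)) ∩ ball (0:E2aux) (1/2))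
      ≤ (ball (0:E2aux) (3/2)).indicator (fun w => ENNReal.ofReal (Real.pi * ‖w‖)) z := by
  set B : Set E2aux := ball (0:E2aux) 1 \ ball 0 (1/2) with hB
  set T := (fun x : E2aux => x - z) ⁻¹' B ∩ ball (0:E2aux) (1/2) with hT
  rcases lt_or_ge ‖z‖ (3/2) with h32 | h32
  swap
  · have hTe : T = ∅ := by
      ext x
      simp only [hT, hB, mem_inter_iff, mem_preimage, mem_diff, mem_ball_zero_iff,
        mem_empty_iff_false, iff_false]
      rintro ⟨⟨hx1, _⟩, hx2⟩
      have : ‖z‖ ≤ ‖x‖ + ‖x - z‖ := by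
        calc ‖z‖ = ‖x - (x - z)‖ := by rw [sub_sub_cancel]
        _ ≤ ‖x‖ + ‖x - z‖ := norm_sub_le _ _
      linarith
    rw [hTe, measure_empty]
    exact zero_le
  rw [indicator_of_mem (mem_ball_zero_iff.mpr h32)]
  rcases le_or_gt (1/2) ‖z‖ with hz2 | hz2
  · calc volume T ≤ volume (ball (0:E2aux) (1/2)) := measure_mono inter_subset_right
      _ = ENNReal.ofReal (Real.pi * (1/2) ^ 2) := vol_ball_aux _ (by norm_num)
      _ ≤ ENNReal.ofReal (Real.pi * ‖z‖) := by
          refine ENNReal.ofReal_le_ofReal ?_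
          nlinarith [Real.pi_pos]
  · have hsub : T ⊆ ball (0:E2aux) (1/2) \ ball 0 (1/2 - ‖z‖) := by
      rintro x ⟨hx1, hx2⟩
      refine ⟨hx2, fun hx3 => ?_⟩
      rw [mem_ball_zero_iff] at hx3
      rw [mem_preimage, hB, mem_diff, mem_ball_zero_iff] at hx1
      have h1 : ¬ ‖x - z‖ < 1/2 := fun h => hx1.2 (mem_ball_zero_iff.mpr h)
      have h2 : ‖x - z‖ ≤ ‖x‖ + ‖z‖ := norm_sub_le _ _
      linarith [not_lt.mp h1]
    calc volume T ≤ volume (ball (0:E2aux) (1/2) \ ball 0 (1/2 - ‖z‖)) := measure_mono hsub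
      _ = volume (ball (0:E2aux) (1/2)) - volume (ball (0:E2aux) (1/2 - ‖z‖)) :=
          measure_diff (ball_subset_ball (by linarith [norm_nonneg z]))
            measurableSet_ball.nullMeasurableSet (ne_of_lt measure_ball_lt_top)
      _ = ENNReal.ofReal (Real.pi * (1/2) ^ 2) - ENNReal.ofReal (Real.pi * (1/2 - ‖z‖) ^ 2) := by
          rw [vol_ball_aux _ (by norm_num), vol_ball_aux _ (by linarith)]
      _ ≤ ENNReal.ofReal (Real.pi * ‖z‖) := by
          rw [← ENNReal.ofReal_sub _ (by positivity)]
          refine ENNReal.ofReal_le_ofReal ?_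
          nlinarith [Real.pi_pos, norm_nonneg z, mul_nonneg Real.pi_pos.le (sq_nonneg ‖z‖)]

open Metric

theorem stmt17 (p : ℝ) (hp : -3 < p) :
    IntegrableOn
      (fun q : EuclideanSpace ℝ (Fin 2) × EuclideanSpace ℝ (Fin 2) => ‖q.1 - q.2‖ ^ p)
      (Metric.ball 0 (1/2) ×ˢ (Metric.ball 0 1 \ Metric.ball 0 (1/2))) volume := by
  have hball : (∫⁻ z in ball (0:E2aux) (3/2), ENNReal.ofReal (‖z‖ ^ (p+1))) < ⊤ :=
    ball_lintegral_aux (by linarith)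
  have hshell := shell_bound_aux
  have hmeas : Measurable fun q : E2aux × E2aux => ‖q.1 - q.2‖ ^ p :=
    meas_rpow_aux ((measurable_fst.sub measurable_snd).norm) (fun _ => norm_nonneg _) p
  have hmf : Measurable fun z : E2aux => ENNReal.ofReal (‖z‖ ^ p) :=
    (meas_rpow_aux measurable_norm (fun _ => norm_nonneg _) p).ennreal_ofReal
  have hmf1 : Measurable fun z : E2aux => ENNReal.ofReal (‖z‖ ^ (p+1)) :=
    (meas_rpow_aux measurable_norm (fun _ => norm_nonneg _) (p+1)).ennreal_ofReal
  set A : Set E2aux := ball 0 (1/2) with hA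
  set B : Set E2aux := ball 0 1 \ ball 0 (1/2) with hB
  have hAm : MeasurableSet A := measurableSet_ball
  have hBm : MeasurableSet B := measurableSet_ball.diff measurableSet_ball
  set f : E2aux → ℝ≥0∞ := fun z => ENNReal.ofReal (‖z‖ ^ p) with hf
  set F : E2aux × E2aux → ℝ≥0∞ :=
    ((fun w : E2aux × E2aux => w.1 - w.2) ⁻¹' B).indicator (fun w => f w.2) with hF
  have hFm : Measurable F :=
    (hmf.comp measurable_snd).indicator ((measurable_fst.sub measurable_snd) hBm)
  constructor
  · exact (hmeas.aestronglyMeasurable).restrict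
  · rw [hasFiniteIntegral_iff_ofReal (Filter.Eventually.of_forall fun q =>
      Real.rpow_nonneg (norm_nonneg _) _)]
    rw [Measure.volume_eq_prod, ← Measure.prod_restrict]
    rw [lintegral_prod _ ((hmeas.ennreal_ofReal).aemeasurable)]
    have step1 : ∀ x : E2aux, (∫⁻ y in B, ENNReal.ofReal (‖x - y‖ ^ p)) = ∫⁻ z, F (x, z) := by
      intro x
      have h1 : (∫⁻ y in B, ENNReal.ofReal (‖x - y‖ ^ p))
          = ∫⁻ y, B.indicator (fun y => f (x - y)) y := (lintegral_indicator hBm _).symm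
      rw [h1]
      have h2 : (fun y => B.indicator (fun y => f (x - y)) y) = fun y => F (x, x - y) := by
        funext y
        by_cases hy : y ∈ B
        · rw [indicator_of_mem hy, hF,
            indicator_of_mem (by simpa [sub_sub_cancel] using hy : (x, x - y) ∈ _)]
        · rw [indicator_of_notMem hy, hF,
            indicator_of_notMem (by simpa [sub_sub_cancel] using hy)]
      rw [h2]
      exact (Measure.measurePreserving_sub_left volume x).lintegral_comp
        (hFm.comp (measurable_const.prodMk measurable_id))
    calc (∫⁻ x in A, ∫⁻ y in B, ENNReal.ofReal (‖x - y‖ ^ p))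
        = ∫⁻ x in A, ∫⁻ z, F (x, z) := lintegral_congr fun x => step1 x
      _ = ∫⁻ z, ∫⁻ x in A, F (x, z) := lintegral_lintegral_swap hFm.aemeasurable
      _ = ∫⁻ z, f z * volume ((fun x : E2aux => x - z) ⁻¹' B ∩ A) := by
          refine lintegral_congr fun z => ?_
          have h3 : (fun x => F (x, z))
              = ((fun x : E2aux => x - z) ⁻¹' B).indicator (fun _ => f z) := by
            funext x
            by_cases hx : x - z ∈ B
            · rw [hF, indicator_of_mem (by simpa using hx : (x, z) ∈ _)]
              exact (indicator_of_mem (mem_preimage.mpr hx) _).symm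
            · rw [hF, indicator_of_notMem (by simpa using hx)]
              exact (indicator_of_notMem (fun h => hx (mem_preimage.mp h)) _).symm
          have hpm : MeasurableSet ((fun x : E2aux => x - z) ⁻¹' B) :=
            (measurable_sub_const z) hBm
          rw [h3, lintegral_indicator_const hpm, Measure.restrict_apply hpm]
      _ ≤ ∫⁻ z, f z * (ball (0:E2aux) (3/2)).indicator
            (fun w => ENNReal.ofReal (Real.pi * ‖w‖)) z :=
          lintegral_mono fun z => mul_le_mul_right (hshell z) _
      _ = ∫⁻ z in ball (0:E2aux) (3/2), f z * ENNReal.ofReal (Real.pi * ‖z‖) := by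
          rw [← lintegral_indicator measurableSet_ball]
          refine lintegral_congr fun z => ?_
          by_cases hz : z ∈ ball (0:E2aux) (3/2)
          · simp [indicator_of_mem hz]
          · simp [indicator_of_notMem hz]
      _ ≤ ∫⁻ z in ball (0:E2aux) (3/2),
            ENNReal.ofReal Real.pi * ENNReal.ofReal (‖z‖ ^ (p+1)) := by
          refine lintegral_mono fun z => ?_
          rcases eq_or_ne z 0 with rfl | hz0
          · simp
          · have hzpos : (0:ℝ) < ‖z‖ := norm_pos_iff.mpr hz0
            rw [hf, ← ENNReal.ofReal_mul (Real.rpow_nonneg (norm_nonneg z) p),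
              ← ENNReal.ofReal_mul Real.pi_pos.le]
            refine ENNReal.ofReal_le_ofReal (le_of_eq ?_)
            rw [Real.rpow_add_one hzpos.ne' p]
            ring
      _ = ENNReal.ofReal Real.pi * ∫⁻ z in ball (0:E2aux) (3/2), ENNReal.ofReal (‖z‖ ^ (p+1)) :=
          lintegral_const_mul _ hmf1
      _ < ⊤ := ENNReal.mul_lt_top ENNReal.ofReal_lt_top hball
end
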